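/- Let $a:\mathbb{R}\to\mathbb{C}$ be $C^k$ on $(0,\infty)$ satisfying $|a^{(j)}(\theta)|\le A\,\theta^{-j}(1\wedge r\theta)$ for $0\le j\le k$ and all $\theta>0$, for some constants $A,r>0$. Fix $\lambda>0$ and let $P_k(\theta)=\sum_{\ell=1}^{k-1}\frac{a^{(\ell)}(\lambda)}{\ell!}(\theta-\lambda)^\ell$. Then the Taylor remainder $\mathcal{E}(\theta)=a(\theta)-a(\lambda)-P_k(\theta)$ satisfies $|\mathcal{E}(\theta)|\lesssim_k A\,(1\wedge r\lambda)\,\big|\tfrac{\theta-\lambda}{\lambda}\big|^k$ for all $\theta>0$. -/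

import Mathlib

open Real Set

private lemma iterOpen {f : ℝ → ℂ} {s : Set ℝ} (hs : IsOpen s) (n : ℕ) {x : ℝ} (hx : x ∈ s) :
    iteratedDerivWithin n f s x = iteratedDeriv n f x := by
  rw [iteratedDerivWithin_eq_iteratedFDerivWithin, iteratedDeriv_eq_iteratedFDeriv,
    iteratedFDerivWithin_of_isOpen n hs hx]

private lemma iterWithin_eq {f : ℝ → ℂ} {s t : Set ℝ} (hs : IsOpen s) (hts : t ⊆ s)
    (ht : UniqueDiffOn ℝ t) {k : ℕ} (hf : ContDiffOn ℝ k f s) :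
    ∀ n ≤ k, ∀ x ∈ t, iteratedDerivWithin n f t x = iteratedDeriv n f x := by
  intro n
  induction n with
  | zero => intro _ x _; simp [iteratedDerivWithin_zero, iteratedDeriv_zero]
  | succ n ih =>
    intro hn x hx
    have hn' : n ≤ k := Nat.le_of_succ_le hn
    have hdiff : DifferentiableAt ℝ (iteratedDeriv n f) x := by
      have h1 : DifferentiableWithinAt ℝ (iteratedDerivWithin n f s) s x :=
        (hf.differentiableOn_iteratedDerivWithin (by exact_mod_cast Nat.lt_of_succ_le hn)
          hs.uniqueDiffOn) x (hts hx)
      have h2 : DifferentiableAt ℝ (iteratedDerivWithin n f s) x :=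
        h1.differentiableAt (hs.mem_nhds (hts hx))
      refine h2.congr_of_eventuallyEq ?_
      filter_upwards [hs.mem_nhds (hts hx)] with y hy using (iterOpen hs n hy).symm
      
    rw [iteratedDerivWithin_succ, iteratedDeriv_succ,
      derivWithin_congr (fun y hy => ih hn' y hy) (ih hn' x hx)]
    exact hdiff.derivWithin (ht x hx)

private lemma taylor_two_sided {f : ℝ → ℂ} {s : Set ℝ} (hs : IsOpen s) {n : ℕ} {x₀ x C : ℝ}
    (hf : ContDiffOn ℝ (n + 1) f s)
    (hsub : Icc (min x₀ x) (max x₀ x) ⊆ s)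
    (hC : ∀ y ∈ Icc (min x₀ x) (max x₀ x), ‖iteratedDeriv (n + 1) f y‖ ≤ C) :
    ‖f x - ∑ i ∈ Finset.range (n + 1),
        (((i.factorial : ℝ))⁻¹ * (x - x₀) ^ i) • iteratedDeriv i f x₀‖
      ≤ C * |x - x₀| ^ (n + 1) := by
  have hx₀mem : x₀ ∈ Icc (min x₀ x) (max x₀ x) := ⟨min_le_left _ _, le_max_left _ _⟩
  have hC0 : 0 ≤ C := le_trans (norm_nonneg _) (hC x₀ hx₀mem)
  have hfact : (1 : ℝ) ≤ n.factorial := by exact_mod_cast n.factorial_pos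
  rcases lt_trichotomy x₀ x with h | h | h
  · -- case x₀ < x
    have hmin : min x₀ x = x₀ := min_eq_left h.le
    have hmax : max x₀ x = x := max_eq_right h.le
    rw [hmin, hmax] at hsub hC
    have hud : UniqueDiffOn ℝ (Icc x₀ x) := uniqueDiffOn_Icc h
    have heq := iterWithin_eq (k := n + 1) hs hsub hud hf
    have hb := taylor_mean_remainder_bound (f := f) (a := x₀) (b := x) (C := C) (n := n) h.le
      (hf.mono hsub) (right_mem_Icc.2 h.le)
      (fun y hy => by rw [heq (n+1) le_rfl y hy]; exact hC y hy)
    rw [taylor_within_apply] at hb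
    have hsumeq : ∑ i ∈ Finset.range (n + 1),
        (((i.factorial : ℝ))⁻¹ * (x - x₀) ^ i) • iteratedDerivWithin i f (Icc x₀ x) x₀
        = ∑ i ∈ Finset.range (n + 1),
        (((i.factorial : ℝ))⁻¹ * (x - x₀) ^ i) • iteratedDeriv i f x₀ := by
      refine Finset.sum_congr rfl fun i hi => ?_
      simp only [Finset.mem_range] at hi
      rw [heq i (by omega) x₀ (left_mem_Icc.2 h.le)]
    rw [hsumeq] at hb
    refine hb.trans ?_
    rw [abs_of_nonneg (by linarith : (0:ℝ) ≤ x - x₀)]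
    exact div_le_self (mul_nonneg hC0 (pow_nonneg (by linarith) _)) hfact
  · -- case x₀ = x
    subst h
    have : ∑ i ∈ Finset.range (n + 1),
        (((i.factorial : ℝ))⁻¹ * (x₀ - x₀) ^ i) • iteratedDeriv i f x₀ = f x₀ := by
      rw [Finset.sum_eq_single 0] <;> simp +contextual [Nat.pos_iff_ne_zero, zero_pow]
    rw [this]
    simp [hC0]
  · -- case x < x₀
    have hmin : min x₀ x = x := min_eq_right h.le
    have hmax : max x₀ x = x₀ := max_eq_left h.le
    rw [hmin, hmax] at hsub hC
    set g : ℝ → ℂ := fun y => f (2 * x₀ - y) with hg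
    have hgiter : ∀ (m : ℕ) (y : ℝ), iteratedDeriv m g y
        = ((-1 : ℝ)) ^ m • iteratedDeriv m f (2 * x₀ - y) := by
      intro m y
      have h1 : g = fun y => (fun z => f (2 * x₀ + z)) (-y) := by
        funext y; simp [hg, sub_eq_add_neg]
      rw [h1, iteratedDeriv_comp_neg m (fun z => f (2 * x₀ + z)) y,
        iteratedDeriv_comp_const_add m f (2 * x₀)]
      norm_num [sub_eq_add_neg]
    set s' : Set ℝ := (fun y => 2 * x₀ - y) ⁻¹' s with hs'
    have hs'open : IsOpen s' := (hs.preimage (by continuity))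
    have hgf : ContDiffOn ℝ (n + 1) g s' :=
      hf.comp ((contDiff_const.sub contDiff_id).contDiffOn) (fun y hy => hy)
    have hJsub : Icc x₀ (2 * x₀ - x) ⊆ s' := by
      intro y hy
      exact hsub ⟨by simp only [mem_Icc] at hy ⊢; linarith [hy.2], by
        simp only [mem_Icc] at hy ⊢; linarith [hy.1]⟩
    have hud : UniqueDiffOn ℝ (Icc x₀ (2 * x₀ - x)) := uniqueDiffOn_Icc (by linarith)
    have heq := iterWithin_eq (k := n + 1) hs'open hJsub hud hgf
    have hb := taylor_mean_remainder_bound (f := g) (a := x₀) (b := 2 * x₀ - x) (C := C) (n := n)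
      (by linarith) (hgf.mono hJsub) (right_mem_Icc.2 (by linarith))
      (fun y hy => by
        rw [heq (n+1) le_rfl y hy, hgiter, norm_smul, norm_pow, norm_neg, norm_one, one_pow,
          one_mul]
        refine hC _ ?_
        simp only [mem_Icc] at hy ⊢
        constructor <;> linarith [hy.1, hy.2])
    rw [taylor_within_apply] at hb
    have hgx : g (2 * x₀ - x) = f x := by rw [hg]; norm_num
    have hsumeq : ∑ i ∈ Finset.range (n + 1),
        (((i.factorial : ℝ))⁻¹ * (2 * x₀ - x - x₀) ^ i) • iteratedDerivWithin i g
          (Icc x₀ (2 * x₀ - x)) x₀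
        = ∑ i ∈ Finset.range (n + 1),
        (((i.factorial : ℝ))⁻¹ * (x - x₀) ^ i) • iteratedDeriv i f x₀ := by
      refine Finset.sum_congr rfl fun i hi => ?_
      simp only [Finset.mem_range] at hi
      rw [heq i (by omega) x₀ (left_mem_Icc.2 (by linarith)), hgiter]
      have h2 : 2 * x₀ - x₀ = x₀ := by ring
      rw [h2, smul_smul]
      congr 1
      rw [mul_assoc, ← mul_pow]
      ring_nf
    rw [hgx, hsumeq] at hb
    refine hb.trans ?_
    have habs : |x - x₀| = 2 * x₀ - x - x₀ := by
      rw [abs_sub_comm, abs_of_nonneg (by linarith)]; ring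
    rw [habs]
    exact div_le_self (mul_nonneg hC0 (pow_nonneg (by linarith) _)) hfact

/-- Quantitative Taylor remainder estimate: if `|a^{(j)}(θ)| ≤ A θ^{-j}(1 ∧ rθ)` for
`0 ≤ j ≤ k` on `(0,∞)`, then the Taylor remainder
`E(θ) = a(θ) - a(λ) - ∑_{ℓ=1}^{k-1} a^{(ℓ)}(λ)(θ-λ)^ℓ/ℓ!` satisfies
`|E(θ)| ≲_k A (1 ∧ rλ) |((θ-λ)/λ)|^k` for all `θ > 0`. -/
theorem taylor_remainder_bound (k : ℕ) (hk : 1 ≤ k) :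
    ∃ C > 0, ∀ (a : ℝ → ℂ) (A r lam : ℝ), 0 < A → 0 < r → 0 < lam →
      ContDiffOn ℝ k a (Ioi 0) →
      (∀ j ≤ k, ∀ θ : ℝ, 0 < θ →
        ‖iteratedDeriv j a θ‖ ≤ A * θ ^ (-(j : ℝ)) * min 1 (r * θ)) →
      ∀ θ : ℝ, 0 < θ →
        ‖a θ - a lam -
            ∑ ℓ ∈ Finset.Icc 1 (k - 1),
              (iteratedDeriv ℓ a lam / (Nat.factorial ℓ : ℂ)) * ((θ : ℂ) - lam) ^ ℓ‖ ≤
          C * A * min 1 (r * lam) * (|θ - lam| / lam) ^ k := by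
  obtain ⟨n, rfl⟩ : ∃ n, k = n + 1 := ⟨k - 1, (Nat.succ_pred_eq_of_pos hk).symm⟩
  refine ⟨3 * ((n : ℝ) + 4) * 2 ^ (n + 1), by positivity, ?_⟩
  intro a A r lam hA hr hlam ha hbound θ hθ
  simp only [Nat.add_sub_cancel]
  set m := min 1 (r * lam) with hmdef
  have hm0 : (0:ℝ) < m := lt_min one_pos (by positivity)
  set t := |θ - lam| / lam with htdef
  have ht0 : (0:ℝ) ≤ t := by positivity
  set S := ∑ ℓ ∈ Finset.Icc 1 n,
      (iteratedDeriv ℓ a lam / (Nat.factorial ℓ : ℂ)) * ((θ : ℂ) - (lam : ℂ)) ^ ℓ with hSdef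
  have hsum : ∑ i ∈ Finset.range (n + 1),
      (((i.factorial : ℝ))⁻¹ * (θ - lam) ^ i) • iteratedDeriv i a lam = a lam + S := by
    have h1 : Finset.Icc 1 n = Finset.Ico 1 (n + 1) := by rw [Finset.Ico_add_one_right_eq_Icc]
    rw [hSdef, h1, Finset.range_eq_Ico, Finset.sum_eq_sum_Ico_succ_bot (by omega)]
    congr 1
    · simp
    · refine Finset.sum_congr rfl fun i hi => ?_
      rw [Complex.real_smul]
      push_cast
      rw [div_eq_mul_inv]
      ring
  have hEeq : a θ - a lam - S = a θ - ∑ i ∈ Finset.range (n + 1),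
      (((i.factorial : ℝ))⁻¹ * (θ - lam) ^ i) • iteratedDeriv i a lam := by
    rw [hsum]; ring
  have hacd : ContDiffOn ℝ ((n : WithTop ℕ∞) + 1) a (Ioi 0) := by exact_mod_cast ha
  rcases le_or_gt (|θ - lam|) (lam / 2) with hcase | hcase
  · -- near case
    rw [abs_le] at hcase
    obtain ⟨hc1, hc2⟩ := hcase
    have hmem : ∀ y ∈ Icc (min lam θ) (max lam θ), lam / 2 ≤ y ∧ y ≤ lam + lam / 2 := by
      intro y hy
      obtain ⟨hy1, hy2⟩ := hy
      have hmin : lam / 2 ≤ min lam θ := le_min (by linarith) (by linarith)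
      have hmax : max lam θ ≤ lam + lam / 2 := max_le (by linarith) (by linarith)
      exact ⟨by linarith, by linarith⟩
    have hsub : Icc (min lam θ) (max lam θ) ⊆ Ioi (0:ℝ) := by
      intro y hy
      have := (hmem y hy).1
      simp only [mem_Ioi]
      linarith
    have hCbound : ∀ y ∈ Icc (min lam θ) (max lam θ),
        ‖iteratedDeriv (n + 1) a y‖ ≤ A * (2 / lam) ^ (n + 1) * (3 / 2 * m) := by
      intro y hy
      obtain ⟨hy1, hy2⟩ := hmem y hy
      have hy0 : 0 < y := by linarith
      refine (hbound (n + 1) le_rfl y hy0).trans ?_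
      have h1 : y ^ (-((n + 1 : ℕ) : ℝ)) = ((y ^ (n + 1) : ℝ))⁻¹ := by
        rw [Real.rpow_neg hy0.le, Real.rpow_natCast]
      rw [h1]
      have h2 : ((y ^ (n + 1) : ℝ))⁻¹ ≤ (2 / lam) ^ (n + 1) := by
        rw [← inv_pow]
        refine pow_le_pow_left₀ (by positivity) ?_ _
        have hl2 : lam / 2 ≤ y := hy1
        have := inv_anti₀ (by positivity : (0:ℝ) < lam / 2) hl2
        rwa [inv_div] at this
      have h3 : min 1 (r * y) ≤ 3 / 2 * m := by
        rcases le_total (r * lam) 1 with hc | hc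
        · have hmval : m = r * lam := min_eq_right hc
          calc min 1 (r * y) ≤ r * y := min_le_right _ _
            _ ≤ 3 / 2 * (r * lam) := by nlinarith
            _ = 3 / 2 * m := by rw [hmval]
        · have hmval : m = 1 := min_eq_left hc
          calc min 1 (r * y) ≤ 1 := min_le_left _ _
            _ ≤ 3 / 2 * m := by rw [hmval]; norm_num
      have hmin0 : (0:ℝ) ≤ min 1 (r * y) := le_min zero_le_one (by positivity)
      calc A * (y ^ (n + 1))⁻¹ * min 1 (r * y)
          ≤ A * (2 / lam) ^ (n + 1) * min 1 (r * y) := by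
            exact mul_le_mul_of_nonneg_right
              (mul_le_mul_of_nonneg_left h2 hA.le) hmin0
        _ ≤ A * (2 / lam) ^ (n + 1) * (3 / 2 * m) := by
            exact mul_le_mul_of_nonneg_left h3 (by positivity)
    have hT := taylor_two_sided isOpen_Ioi hacd hsub hCbound
    rw [hEeq]
    refine hT.trans ?_
    have hcoef : (3 / 2 : ℝ) ≤ 3 * ((n : ℝ) + 4) := by
      have : (0:ℝ) ≤ n := Nat.cast_nonneg n
      linarith
    have hXpos : (0:ℝ) ≤ 2 ^ (n + 1) * A * m * |θ - lam| ^ (n + 1) / lam ^ (n + 1) := by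
      positivity
    calc A * (2 / lam) ^ (n + 1) * (3 / 2 * m) * |θ - lam| ^ (n + 1)
        = 3 / 2 * (2 ^ (n + 1) * A * m * |θ - lam| ^ (n + 1) / lam ^ (n + 1)) := by
          rw [div_pow]; field_simp
      _ ≤ 3 * ((n : ℝ) + 4) * (2 ^ (n + 1) * A * m * |θ - lam| ^ (n + 1) / lam ^ (n + 1)) :=
          mul_le_mul_of_nonneg_right hcoef hXpos
      _ = 3 * ((n : ℝ) + 4) * 2 ^ (n + 1) * A * m * (|θ - lam| / lam) ^ (n + 1) := by
          rw [div_pow]; ring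
  · -- far case
    have ht2 : 1 ≤ 2 * t := by
      rw [htdef, ← mul_div_assoc, le_div_iff₀ hlam]
      linarith
    have h0θ := hbound 0 (Nat.zero_le _) θ hθ
    simp only [iteratedDeriv_zero, Nat.cast_zero, neg_zero, Real.rpow_zero, mul_one] at h0θ
    have h0lam := hbound 0 (Nat.zero_le _) lam hlam
    simp only [iteratedDeriv_zero, Nat.cast_zero, neg_zero, Real.rpow_zero, mul_one] at h0lam
    have halam : ‖a lam‖ ≤ A * m := by rw [hmdef]; exact h0lam
    have hθle : θ ≤ lam * (1 + t) := by
      have h1 : θ - lam ≤ |θ - lam| := le_abs_self _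
      have h2 : lam * t = |θ - lam| := by rw [htdef]; field_simp
      nlinarith
    have hminθ : min 1 (r * θ) ≤ 3 * t * m := by
      rcases le_total (r * lam) 1 with hc | hc
      · have hmval : m = r * lam := min_eq_right hc
        calc min 1 (r * θ) ≤ r * θ := min_le_right _ _
          _ ≤ r * (lam * (1 + t)) := by nlinarith
          _ ≤ 3 * t * (r * lam) := by nlinarith [mul_pos hr hlam]
          _ = 3 * t * m := by rw [hmval]
      · have hmval : m = 1 := min_eq_left hc
        calc min 1 (r * θ) ≤ 1 := min_le_left _ _
          _ ≤ 3 * t * m := by rw [hmval]; linarith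
    have h2tn : (1:ℝ) ≤ (2 * t) ^ n := one_le_pow₀ ht2
    have htpow : t ≤ 2 ^ n * t ^ (n + 1) := by
      calc t = t * 1 := (mul_one t).symm
        _ ≤ t * (2 * t) ^ n := mul_le_mul_of_nonneg_left h2tn ht0
        _ = 2 ^ n * t ^ (n + 1) := by rw [mul_pow]; ring
    have h1m : (1:ℝ) ≤ 2 ^ (n + 1) * t ^ (n + 1) := by
      calc (1:ℝ) ≤ (2 * t) ^ (n + 1) := one_le_pow₀ ht2
        _ = 2 ^ (n + 1) * t ^ (n + 1) := mul_pow 2 t (n + 1)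
    have hterm : ∀ ℓ ∈ Finset.Icc 1 n,
        ‖(iteratedDeriv ℓ a lam / (Nat.factorial ℓ : ℂ)) * ((θ : ℂ) - (lam : ℂ)) ^ ℓ‖
          ≤ A * m * (2 ^ (n + 1) * t ^ (n + 1)) := by
      intro ℓ hℓ
      simp only [Finset.mem_Icc] at hℓ
      have hb := hbound ℓ (by omega) lam hlam
      have hrpow : lam ^ (-(ℓ : ℝ)) = ((lam ^ ℓ : ℝ))⁻¹ := by
        rw [Real.rpow_neg hlam.le, Real.rpow_natCast]
      rw [hrpow] at hb
      have hnorm : ‖((θ : ℂ) - (lam : ℂ))‖ = |θ - lam| := by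
        rw [show ((θ : ℂ) - (lam : ℂ)) = ((θ - lam : ℝ) : ℂ) by push_cast; ring,
          Complex.norm_real, Real.norm_eq_abs]
      have hfℓ : (1:ℝ) ≤ ‖(Nat.factorial ℓ : ℂ)‖ := by
        rw [show ((Nat.factorial ℓ : ℂ)) = ((Nat.factorial ℓ : ℝ) : ℂ) by push_cast; rfl,
          Complex.norm_real, Real.norm_eq_abs, abs_of_nonneg (by positivity)]
        exact_mod_cast ℓ.factorial_pos
      rw [norm_mul, norm_div, norm_pow, hnorm]
      have hdl : ‖iteratedDeriv ℓ a lam‖ / ‖(Nat.factorial ℓ : ℂ)‖ ≤ ‖iteratedDeriv ℓ a lam‖ :=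
        div_le_self (norm_nonneg _) hfℓ
      calc ‖iteratedDeriv ℓ a lam‖ / ‖(Nat.factorial ℓ : ℂ)‖ * |θ - lam| ^ ℓ
          ≤ A * (lam ^ ℓ)⁻¹ * min 1 (r * lam) * |θ - lam| ^ ℓ :=
            mul_le_mul_of_nonneg_right (hdl.trans hb) (by positivity)
        _ = A * m * t ^ ℓ := by
            rw [htdef, hmdef, div_pow]
            field_simp
        _ ≤ A * m * (2 ^ (n + 1) * t ^ (n + 1)) := by
            refine mul_le_mul_of_nonneg_left ?_ (by positivity)
            calc t ^ ℓ ≤ (2 * t) ^ ℓ := pow_le_pow_left₀ ht0 (by linarith) ℓ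
              _ ≤ (2 * t) ^ (n + 1) := pow_le_pow_right₀ (by linarith) (by omega)
              _ = 2 ^ (n + 1) * t ^ (n + 1) := mul_pow 2 t (n + 1)
    have hSnorm : ‖S‖ ≤ (n : ℝ) * (A * m * (2 ^ (n + 1) * t ^ (n + 1))) := by
      rw [hSdef]
      refine (norm_sum_le _ _).trans ((Finset.sum_le_sum hterm).trans ?_)
      rw [Finset.sum_const, Nat.card_Icc]
      simp [nsmul_eq_mul]
    have htri : ‖a θ - a lam - S‖ ≤ ‖a θ‖ + ‖a lam‖ + ‖S‖ := by
      have h1 := norm_sub_le (a θ - a lam) S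
      have h2 := norm_sub_le (a θ) (a lam)
      linarith
    have hXpos : (0:ℝ) ≤ A * m * t ^ (n + 1) := by positivity
    have e1 : ‖a θ‖ ≤ 3 * 2 ^ n * (A * m * t ^ (n + 1)) := by
      refine h0θ.trans ?_
      calc A * min 1 (r * θ) ≤ A * (3 * t * m) := mul_le_mul_of_nonneg_left hminθ hA.le
        _ = 3 * A * m * t := by ring
        _ ≤ 3 * A * m * (2 ^ n * t ^ (n + 1)) := mul_le_mul_of_nonneg_left htpow (by positivity)
        _ = 3 * 2 ^ n * (A * m * t ^ (n + 1)) := by ring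
    have e2 : ‖a lam‖ ≤ (2 ^ (n + 1) : ℝ) * (A * m * t ^ (n + 1)) := by
      refine halam.trans ?_
      calc A * m = A * m * 1 := by ring
        _ ≤ A * m * (2 ^ (n + 1) * t ^ (n + 1)) := mul_le_mul_of_nonneg_left h1m (by positivity)
        _ = 2 ^ (n + 1) * (A * m * t ^ (n + 1)) := by ring
    have e3 : ‖S‖ ≤ ((n : ℝ) * 2 ^ (n + 1)) * (A * m * t ^ (n + 1)) :=
      hSnorm.trans (le_of_eq (by ring))
    have hcoef : (3 * 2 ^ n + 2 ^ (n + 1) + (n : ℝ) * 2 ^ (n + 1))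
        ≤ 3 * ((n : ℝ) + 4) * 2 ^ (n + 1) := by
      have hn0 : (0:ℝ) ≤ n := Nat.cast_nonneg n
      have hp : (0:ℝ) < 2 ^ n := by positivity
      rw [pow_succ]
      nlinarith
    calc ‖a θ - a lam - S‖ ≤ ‖a θ‖ + ‖a lam‖ + ‖S‖ := htri
      _ ≤ 3 * 2 ^ n * (A * m * t ^ (n + 1)) + 2 ^ (n + 1) * (A * m * t ^ (n + 1))
          + (n : ℝ) * 2 ^ (n + 1) * (A * m * t ^ (n + 1)) := add_le_add (add_le_add e1 e2) e3
      _ = (3 * 2 ^ n + 2 ^ (n + 1) + (n : ℝ) * 2 ^ (n + 1)) * (A * m * t ^ (n + 1)) := by ring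
      _ ≤ 3 * ((n : ℝ) + 4) * 2 ^ (n + 1) * (A * m * t ^ (n + 1)) :=
          mul_le_mul_of_nonneg_right hcoef hXpos
      _ = 3 * ((n : ℝ) + 4) * 2 ^ (n + 1) * A * m * t ^ (n + 1) := by ring
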